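/- (Proposition 3.) Fix 0 < p < 1 and L ∈ ℕ. For T ≥ L let Φ_{L,T}(p) ∈ ℝ^{T×L} have entries [Φ_{L,T}(p)]_{t,k} = ℓ_k(t;p) for t = 0,…,T−1, k = 0,…,L−1, and suppose Φ_{L,T}(p)^T·Φ_{L,T}(p) is invertible with Ψ_p = (Φ_{L,T}(p)^T·Φ_{L,T}(p))^{-1}·Φ_{L,T}(p)^T. If e(0),…,e(T−1) are zero-mean random variables with E[e(s)·e(t)] = λ·δ_{st} (λ > 0), then the covariance matrix of E_lag = Ψ_p·(e(0),…,e(T−1))^T equals λ·(Φ_{L,T}(p)^T·Φ_{L,T}(p))^{-1}; moreover Φ_{L,T}(p)^T·Φ_{L,T}(p) → I_L as T → ∞, hence this covariance matrix converges to λ·I_L, i.e., for every ε > 0 there exists T₀ such that for all T ≥ T₀, ‖λ·Ψ_p·Ψ_p^T − λ·I_L‖ < ε. -/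

import Mathlib

open MeasureTheory Matrix Filter

/-- The discrete Laguerre functions `ℓ_j(t; p)` in time-domain. -/
noncomputable def discreteLaguerre (p : ℝ) : ℕ → ℕ → ℝ
  | 0, t => Real.sqrt (1 - p) * Real.sqrt p ^ t
  | j + 1, 0 => -Real.sqrt p * discreteLaguerre p j 0
  | j + 1, t + 1 =>
      Real.sqrt p * discreteLaguerre p (j + 1) t + discreteLaguerre p j t
        - Real.sqrt p * discreteLaguerre p j (t + 1)
  termination_by j t => (j, t)

private lemma dl_rec (p : ℝ) (j t : ℕ) :
    discreteLaguerre p (j+1) (t+1) - Real.sqrt p * discreteLaguerre p (j+1) t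
      = discreteLaguerre p j t - Real.sqrt p * discreteLaguerre p j (t+1) := by
  rw [discreteLaguerre]
  ring

private lemma dl_zero (p : ℝ) (j : ℕ) :
    discreteLaguerre p (j+1) 0 = -Real.sqrt p * discreteLaguerre p j 0 := by
  rw [discreteLaguerre]

private lemma key_identity (q : ℝ) (a b a' b' : ℕ → ℝ)
    (ha : ∀ t, a (t+1) - q * a t = b t - q * b (t+1))
    (ha' : ∀ t, a' (t+1) - q * a' t = b' t - q * b' (t+1))
    (h0 : (a 0 + q * b 0) * (a' 0 + q * b' 0) = 0) (T : ℕ) :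
    (1 - q^2) * ((∑ t ∈ Finset.range T, a t * a' t) - ∑ t ∈ Finset.range T, b t * b' t)
      = -((a T + q * b T) * (a' T + q * b' T)) := by
  induction T with
  | zero => simpa using h0
  | succ T ih =>
    rw [Finset.sum_range_succ, Finset.sum_range_succ]
    have h1 := ha T
    have h2 := ha' T
    linear_combination ih + (a' (T+1) + q * b' (T+1)) * h1 + (q * a T + b T) * h2

private lemma dl_decay (p : ℝ) (hp0 : 0 < p) (hp1 : p < 1) (j : ℕ) :
    ∃ C : ℝ, 0 < C ∧ ∀ t, |discreteLaguerre p j t|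
      ≤ C * ((Real.sqrt p + 1)/2) ^ t := by
  set q := Real.sqrt p with hq
  have hq0 : 0 < q := Real.sqrt_pos.mpr hp0
  have hq1 : q < 1 := by
    rw [hq, show (1:ℝ) = Real.sqrt 1 by simp]
    exact Real.sqrt_lt_sqrt hp0.le hp1
  set r := (q + 1)/2 with hr
  have hqr : q < r := by rw [hr]; linarith
  have hr1 : r < 1 := by rw [hr]; linarith
  have hr0 : 0 < r := by rw [hr]; linarith
  induction j with
  | zero =>
    refine ⟨Real.sqrt (1 - p) + 1, by positivity, fun t => ?_⟩
    have hd0 : discreteLaguerre p 0 t = Real.sqrt (1-p) * q ^ t := by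
      rw [discreteLaguerre]
    rw [hd0, abs_mul, abs_of_nonneg (Real.sqrt_nonneg _), abs_of_nonneg (pow_nonneg hq0.le _)]
    have h1 : q ^ t ≤ r ^ t := pow_le_pow_left₀ hq0.le hqr.le t
    nlinarith [Real.sqrt_nonneg (1-p), pow_nonneg hr0.le t, pow_nonneg hq0.le t]
  | succ j ih =>
    obtain ⟨C, hC, hb⟩ := ih
    have hrq : (0:ℝ) < r - q := by linarith
    have hpos : 0 < 2*C/(r - q) := div_pos (by linarith) hrq
    refine ⟨|discreteLaguerre p (j+1) 0| + 2*C/(r - q) + 1,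
      by nlinarith [abs_nonneg (discreteLaguerre p (j+1) 0)], fun t => ?_⟩
    set D := |discreteLaguerre p (j+1) 0| + 2*C/(r - q) + 1 with hD
    have hD1 : |discreteLaguerre p (j+1) 0| ≤ D := by
      rw [hD]; linarith
    have hD2 : q * D + 2 * C ≤ D * r := by
      have h2 : 2*C/(r-q) * (r - q) = 2*C := div_mul_cancel₀ _ (ne_of_gt hrq)
      have : 2*C ≤ D * (r - q) := by
        have hDge : 2*C/(r-q) ≤ D := by
          have : 0 ≤ |discreteLaguerre p (j+1) 0| := abs_nonneg _
          rw [hD]; linarith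
        calc 2*C = 2*C/(r-q) * (r-q) := h2.symm
          _ ≤ D * (r - q) := by
              apply mul_le_mul_of_nonneg_right hDge (by linarith)
      nlinarith
    clear hD
    induction t with
    | zero => simpa using hD1
    | succ t iht =>
      have hrec := dl_rec p j t
      have h1 : |discreteLaguerre p (j+1) (t+1)|
          ≤ q * |discreteLaguerre p (j+1) t| + |discreteLaguerre p j t|
            + q * |discreteLaguerre p j (t+1)| := by
        have : discreteLaguerre p (j+1) (t+1)
            = q * discreteLaguerre p (j+1) t + discreteLaguerre p j t
              - q * discreteLaguerre p j (t+1) := by linarith [hrec]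
        rw [this]
        calc |q * discreteLaguerre p (j+1) t + discreteLaguerre p j t
              - q * discreteLaguerre p j (t+1)|
            ≤ |q * discreteLaguerre p (j+1) t + discreteLaguerre p j t|
              + |q * discreteLaguerre p j (t+1)| := abs_sub _ _
          _ ≤ |q * discreteLaguerre p (j+1) t| + |discreteLaguerre p j t|
              + |q * discreteLaguerre p j (t+1)| := by
              have := abs_add_le (q * discreteLaguerre p (j+1) t) (discreteLaguerre p j t)
              linarith
          _ = q * |discreteLaguerre p (j+1) t| + |discreteLaguerre p j t|
              + q * |discreteLaguerre p j (t+1)| := by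
              rw [abs_mul, abs_mul, abs_of_nonneg hq0.le]
      have hb1 := hb t
      have hb2 := hb (t+1)
      have hqrt : q * (C * r^(t+1)) ≤ C * r ^ t := by
        have hle : q * r ≤ 1 := by nlinarith
        calc q * (C * r^(t+1)) = (q*r) * (C * r^t) := by rw [pow_succ' r t]; ring
          _ ≤ 1 * (C * r^t) := by
              apply mul_le_mul_of_nonneg_right hle (by positivity)
          _ = C * r^t := one_mul _
      calc |discreteLaguerre p (j+1) (t+1)|
          ≤ q * |discreteLaguerre p (j+1) t| + |discreteLaguerre p j t|
            + q * |discreteLaguerre p j (t+1)| := h1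
        _ ≤ q * (D * r^t) + C * r^t + C * r^t := by
            have h3 : q * |discreteLaguerre p (j+1) t| ≤ q * (D * r^t) :=
              mul_le_mul_of_nonneg_left iht hq0.le
            have h4 : q * |discreteLaguerre p j (t+1)| ≤ q * (C * r^(t+1)) :=
              mul_le_mul_of_nonneg_left hb2 hq0.le
            linarith
        _ ≤ D * r^(t+1) := by
            have hrt : r^(t+1) = r * r^t := pow_succ' r t
            have := pow_nonneg hr0.le t
            rw [hrt]
            nlinarith

private lemma dl_tendsto_zero (p : ℝ) (hp0 : 0 < p) (hp1 : p < 1) (j : ℕ) :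
    Tendsto (fun t => discreteLaguerre p j t) atTop (nhds 0) := by
  obtain ⟨C, hC, hb⟩ := dl_decay p hp0 hp1 j
  have hq0 : 0 < Real.sqrt p := Real.sqrt_pos.mpr hp0
  have hq1 : Real.sqrt p < 1 := by
    rw [show (1:ℝ) = Real.sqrt 1 by simp]
    exact Real.sqrt_lt_sqrt hp0.le hp1
  have hr0 : (0:ℝ) ≤ (Real.sqrt p + 1)/2 := by linarith
  have hr1 : (Real.sqrt p + 1)/2 < 1 := by linarith
  have hg : Tendsto (fun t : ℕ => C * ((Real.sqrt p + 1)/2) ^ t) atTop (nhds 0) := by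
    have := tendsto_pow_atTop_nhds_zero_of_lt_one hr0 hr1
    simpa using this.const_mul C
  exact squeeze_zero_norm (fun t => by simpa using hb t) hg

private lemma gram_tendsto (p : ℝ) (hp0 : 0 < p) (hp1 : p < 1) (j k : ℕ) :
    Tendsto (fun T => ∑ t ∈ Finset.range T,
        discreteLaguerre p j t * discreteLaguerre p k t)
      atTop (nhds (if j = k then 1 else 0)) := by
  have hq0 : 0 < Real.sqrt p := Real.sqrt_pos.mpr hp0
  have hqsq : Real.sqrt p ^ 2 = p := Real.sq_sqrt hp0.le
  have hp1' : (1:ℝ) - Real.sqrt p ^ 2 ≠ 0 := by rw [hqsq]; linarith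
  -- boundary tendsto helper
  have hbd : ∀ a b a' b' : ℕ → ℝ,
      Tendsto a atTop (nhds 0) → Tendsto b atTop (nhds 0) →
      Tendsto a' atTop (nhds 0) → Tendsto b' atTop (nhds 0) →
      Tendsto (fun T => -((a T + Real.sqrt p * b T) * (a' T + Real.sqrt p * b' T))
        / (1 - Real.sqrt p ^ 2)) atTop (nhds 0) := by
    intro a b a' b' ha hb ha' hb'
    have h1 : Tendsto (fun T => (a T + Real.sqrt p * b T) * (a' T + Real.sqrt p * b' T))
        atTop (nhds 0) := by
      have := ((ha.add (hb.const_mul (Real.sqrt p))).mul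
        (ha'.add (hb'.const_mul (Real.sqrt p))))
      simpa using this
    have := (h1.neg).div_const (1 - Real.sqrt p ^ 2)
    simpa using this
  induction j generalizing k with
  | zero =>
    cases k with
    | zero =>
      simp only [if_pos rfl]
      have hsum : ∀ T, ∑ t ∈ Finset.range T,
          discreteLaguerre p 0 t * discreteLaguerre p 0 t = 1 - p ^ T := by
        intro T
        have hterm : ∀ t, discreteLaguerre p 0 t * discreteLaguerre p 0 t
            = (1 - p) * p ^ t := by
          intro t
          have hd0 : discreteLaguerre p 0 t = Real.sqrt (1-p) * Real.sqrt p ^ t := by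
            rw [discreteLaguerre]
          rw [hd0]
          have h1 : Real.sqrt (1-p) * Real.sqrt (1-p) = 1 - p :=
            Real.mul_self_sqrt (by linarith)
          have h2 : Real.sqrt p ^ t * Real.sqrt p ^ t = p ^ t := by
            rw [← mul_pow, Real.mul_self_sqrt hp0.le]
          calc (Real.sqrt (1-p) * Real.sqrt p ^ t) * (Real.sqrt (1-p) * Real.sqrt p ^ t)
              = (Real.sqrt (1-p) * Real.sqrt (1-p)) * (Real.sqrt p ^ t * Real.sqrt p ^ t) := by ring
            _ = (1-p) * p ^ t := by rw [h1, h2]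
        rw [Finset.sum_congr rfl fun t _ => hterm t]
        induction T with
        | zero => simp
        | succ T ihT => rw [Finset.sum_range_succ, ihT]; ring
      have : Tendsto (fun T : ℕ => 1 - p ^ T) atTop (nhds (1 - 0)) :=
        tendsto_const_nhds.sub
          (tendsto_pow_atTop_nhds_zero_of_lt_one hp0.le hp1)
      simp only [sub_zero] at this
      exact Tendsto.congr (fun T => (hsum T).symm) this
    | succ k =>
      rw [if_neg (by omega)]
      have hkey := key_identity (Real.sqrt p) (discreteLaguerre p 0) (fun _ => 0)
        (discreteLaguerre p (k+1)) (discreteLaguerre p k)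
        (fun t => by
          have e1 : discreteLaguerre p 0 (t+1) = Real.sqrt (1-p) * Real.sqrt p ^ (t+1) := by
            rw [discreteLaguerre]
          have e2 : discreteLaguerre p 0 t = Real.sqrt (1-p) * Real.sqrt p ^ t := by
            rw [discreteLaguerre]
          rw [e1, e2]; ring)
        (fun t => dl_rec p k t)
        (by
          rw [dl_zero]
          ring)
      have heq : ∀ T, ∑ t ∈ Finset.range T,
          discreteLaguerre p 0 t * discreteLaguerre p (k+1) t
          = -((discreteLaguerre p 0 T + Real.sqrt p * 0)
              * (discreteLaguerre p (k+1) T + Real.sqrt p * discreteLaguerre p k T))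
            / (1 - Real.sqrt p ^ 2) := by
        intro T
        have h := hkey T
        simp only [zero_mul, mul_zero, Finset.sum_const_zero, sub_zero, add_zero] at h
        rw [eq_div_iff hp1']
        linear_combination h
      have := hbd (discreteLaguerre p 0) (fun _ => 0)
        (discreteLaguerre p (k+1)) (discreteLaguerre p k)
        (dl_tendsto_zero p hp0 hp1 0) tendsto_const_nhds
        (dl_tendsto_zero p hp0 hp1 (k+1)) (dl_tendsto_zero p hp0 hp1 k)
      exact Tendsto.congr (fun T => (heq T).symm) this
  | succ j ih =>
    cases k with
    | zero =>
      rw [if_neg (by omega)]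
      have hkey := key_identity (Real.sqrt p)
        (discreteLaguerre p (j+1)) (discreteLaguerre p j)
        (discreteLaguerre p 0) (fun _ => 0)
        (fun t => dl_rec p j t)
        (fun t => by
          have e1 : discreteLaguerre p 0 (t+1) = Real.sqrt (1-p) * Real.sqrt p ^ (t+1) := by
            rw [discreteLaguerre]
          have e2 : discreteLaguerre p 0 t = Real.sqrt (1-p) * Real.sqrt p ^ t := by
            rw [discreteLaguerre]
          rw [e1, e2]; ring)
        (by rw [dl_zero]; ring)
      have heq : ∀ T, ∑ t ∈ Finset.range T,
          discreteLaguerre p (j+1) t * discreteLaguerre p 0 t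
          = -((discreteLaguerre p (j+1) T + Real.sqrt p * discreteLaguerre p j T)
              * (discreteLaguerre p 0 T + Real.sqrt p * 0))
            / (1 - Real.sqrt p ^ 2) := by
        intro T
        have h := hkey T
        simp only [zero_mul, mul_zero, Finset.sum_const_zero, sub_zero, add_zero] at h
        rw [eq_div_iff hp1']
        linear_combination h
      have := hbd (discreteLaguerre p (j+1)) (discreteLaguerre p j)
        (discreteLaguerre p 0) (fun _ => 0)
        (dl_tendsto_zero p hp0 hp1 (j+1)) (dl_tendsto_zero p hp0 hp1 j)
        (dl_tendsto_zero p hp0 hp1 0) tendsto_const_nhds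
      exact Tendsto.congr (fun T => (heq T).symm) this
    | succ k =>
      have hkey := key_identity (Real.sqrt p)
        (discreteLaguerre p (j+1)) (discreteLaguerre p j)
        (discreteLaguerre p (k+1)) (discreteLaguerre p k)
        (fun t => dl_rec p j t) (fun t => dl_rec p k t)
        (by rw [dl_zero]; ring)
      have heq : ∀ T, ∑ t ∈ Finset.range T,
          discreteLaguerre p (j+1) t * discreteLaguerre p (k+1) t
          = (∑ t ∈ Finset.range T, discreteLaguerre p j t * discreteLaguerre p k t)
            + -((discreteLaguerre p (j+1) T + Real.sqrt p * discreteLaguerre p j T)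
              * (discreteLaguerre p (k+1) T + Real.sqrt p * discreteLaguerre p k T))
            / (1 - Real.sqrt p ^ 2) := by
        intro T
        have h := hkey T
        have h2 : (∑ t ∈ Finset.range T, discreteLaguerre p (j+1) t * discreteLaguerre p (k+1) t)
            - (∑ t ∈ Finset.range T, discreteLaguerre p j t * discreteLaguerre p k t)
            = -((discreteLaguerre p (j+1) T + Real.sqrt p * discreteLaguerre p j T)
              * (discreteLaguerre p (k+1) T + Real.sqrt p * discreteLaguerre p k T))
            / (1 - Real.sqrt p ^ 2) := by
          rw [eq_div_iff hp1']
          linear_combination h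
        linarith [h2]
      have hB := hbd (discreteLaguerre p (j+1)) (discreteLaguerre p j)
        (discreteLaguerre p (k+1)) (discreteLaguerre p k)
        (dl_tendsto_zero p hp0 hp1 (j+1)) (dl_tendsto_zero p hp0 hp1 j)
        (dl_tendsto_zero p hp0 hp1 (k+1)) (dl_tendsto_zero p hp0 hp1 k)
      have hsum := (ih k).add hB
      simp only [add_zero] at hsum
      have hiff : (if j + 1 = k + 1 then (1:ℝ) else 0) = (if j = k then 1 else 0) := by
        simp
      rw [hiff]
      exact Tendsto.congr (fun T => (heq T).symm) hsum

/-- The `T × L` matrix whose `(t,k)` entry is `ℓ_k(t; p)`. -/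
noncomputable def laguerreMatrix (p : ℝ) (T L : ℕ) : Matrix (Fin T) (Fin L) ℝ :=
  Matrix.of fun t k => discreteLaguerre p (k : ℕ) (t : ℕ)

private lemma psi_psiT {L T : ℕ} (Φ : Matrix (Fin T) (Fin L) ℝ)
    (h : IsUnit (Φᵀ * Φ).det) :
    ((Φᵀ * Φ)⁻¹ * Φᵀ) * ((Φᵀ * Φ)⁻¹ * Φᵀ)ᵀ = (Φᵀ * Φ)⁻¹ := by
  have hsym : (Φᵀ * Φ)ᵀ = Φᵀ * Φ := by
    rw [Matrix.transpose_mul, Matrix.transpose_transpose]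
  rw [Matrix.transpose_mul, Matrix.transpose_transpose, Matrix.transpose_nonsing_inv,
    hsym, Matrix.mul_assoc, ← Matrix.mul_assoc Φᵀ Φ, Matrix.mul_nonsing_inv _ h,
    Matrix.mul_one]

private lemma lag_entry (p : ℝ) (L T : ℕ) (k l : Fin L) :
    ((laguerreMatrix p T L)ᵀ * laguerreMatrix p T L) k l
      = ∑ t ∈ Finset.range T, discreteLaguerre p k t * discreteLaguerre p l t := by
  rw [Matrix.mul_apply,
    ← Fin.sum_univ_eq_sum_range (fun t => discreteLaguerre p k t * discreteLaguerre p l t) T]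
  rfl

private lemma lag_gram_tendsto (p : ℝ) (hp0 : 0 < p) (hp1 : p < 1) (L : ℕ) :
    Tendsto (fun T => (laguerreMatrix p T L)ᵀ * laguerreMatrix p T L) atTop
      (nhds (1 : Matrix (Fin L) (Fin L) ℝ)) := by
  refine tendsto_pi_nhds.2 ?_
  intro k
  rw [tendsto_pi_nhds]
  intro l
  have h := gram_tendsto p hp0 hp1 k l
  have h1 : (1 : Matrix (Fin L) (Fin L) ℝ) k l
      = (if (k : ℕ) = (l : ℕ) then (1:ℝ) else 0) := by
    rw [Matrix.one_apply]
    simp [Fin.val_inj]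
  rw [h1]
  exact Tendsto.congr (fun T => (lag_entry p L T k l).symm) h

private lemma lag_inv_tendsto (p : ℝ) (hp0 : 0 < p) (hp1 : p < 1) (L : ℕ) :
    Tendsto (fun T => ((laguerreMatrix p T L)ᵀ * laguerreMatrix p T L)⁻¹) atTop
      (nhds (1 : Matrix (Fin L) (Fin L) ℝ)) ∧
    Tendsto (fun T => ((laguerreMatrix p T L)ᵀ * laguerreMatrix p T L).det) atTop
      (nhds 1) := by
  have hgram := lag_gram_tendsto p hp0 hp1 L
  have hcdet : Continuous fun A : Matrix (Fin L) (Fin L) ℝ => A.det :=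
    Continuous.matrix_det continuous_id
  have hdet : Tendsto (fun T => ((laguerreMatrix p T L)ᵀ * laguerreMatrix p T L).det)
      atTop (nhds 1) := by
    have := (hcdet.tendsto 1).comp hgram
    simpa [Function.comp_def] using this
  refine ⟨?_, hdet⟩
  have hcadj : Continuous fun A : Matrix (Fin L) (Fin L) ℝ => A.adjugate :=
    Continuous.matrix_adjugate continuous_id
  have hadj : Tendsto (fun T => ((laguerreMatrix p T L)ᵀ * laguerreMatrix p T L).adjugate)
      atTop (nhds 1) := by
    have := (hcadj.tendsto 1).comp hgram
    simpa [Matrix.adjugate_one, Function.comp_def] using this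
  have hsmul := Tendsto.smul (hdet.inv₀ one_ne_zero) hadj
  have heq : ∀ T : ℕ, ((laguerreMatrix p T L)ᵀ * laguerreMatrix p T L)⁻¹
      = ((laguerreMatrix p T L)ᵀ * laguerreMatrix p T L).det⁻¹
        • ((laguerreMatrix p T L)ᵀ * laguerreMatrix p T L).adjugate :=
    fun T => by rw [Matrix.inv_def, Ring.inverse_eq_inv]
  simp only [inv_one, one_smul] at hsmul
  exact Tendsto.congr (fun T => (heq T).symm) hsmul

/-- Proposition 3: for white time-domain noise of variance `λ`, the Laguerre-domain
distortion `E_lag = Ψ_p E_time` has covariance `λ (ΦᵀΦ)⁻¹`; moreover `ΦᵀΦ → I_L` as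
`T → ∞`, hence the covariance `λ Ψ_p Ψ_pᵀ` converges (entrywise, equivalently in sup
norm) to `λ I_L`. -/
theorem white_noise_laguerre_covariance (p : ℝ) (hp0 : 0 < p) (hp1 : p < 1)
    (L : ℕ) (lam : ℝ) (hlam : 0 < lam)
    (T : ℕ) (hTL : L ≤ T)
    (hinv : IsUnit ((laguerreMatrix p T L)ᵀ * laguerreMatrix p T L).det)
    (Ω : Type*) [MeasurableSpace Ω] (μ : Measure Ω) [IsProbabilityMeasure μ]
    (e : Fin T → Ω → ℝ)
    (hmean : ∀ t : Fin T, ∫ ω, e t ω ∂μ = 0)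
    (hint : ∀ s t : Fin T, Integrable (fun ω => e s ω * e t ω) μ)
    (hcov : ∀ s t : Fin T, (∫ ω, e s ω * e t ω ∂μ) = if s = t then lam else 0) :
    (∀ k l : Fin L,
      (∫ ω, (∑ t : Fin T,
              (((laguerreMatrix p T L)ᵀ * laguerreMatrix p T L)⁻¹ *
                (laguerreMatrix p T L)ᵀ) k t * e t ω) *
            (∑ t : Fin T,
              (((laguerreMatrix p T L)ᵀ * laguerreMatrix p T L)⁻¹ *
                (laguerreMatrix p T L)ᵀ) l t * e t ω) ∂μ) =
        lam * ((laguerreMatrix p T L)ᵀ * laguerreMatrix p T L)⁻¹ k l) ∧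
    (∀ ε : ℝ, 0 < ε → ∃ T₀ : ℕ, ∀ T' : ℕ, T₀ ≤ T' →
      (∀ k l : Fin L,
        |(((laguerreMatrix p T' L)ᵀ * laguerreMatrix p T' L - 1 :
            Matrix (Fin L) (Fin L) ℝ)) k l| < ε) ∧
      (∀ k l : Fin L,
        |((lam • ((((laguerreMatrix p T' L)ᵀ * laguerreMatrix p T' L)⁻¹ *
              (laguerreMatrix p T' L)ᵀ) *
            ((((laguerreMatrix p T' L)ᵀ * laguerreMatrix p T' L)⁻¹ *
              (laguerreMatrix p T' L)ᵀ))ᵀ) - lam • 1 :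
            Matrix (Fin L) (Fin L) ℝ)) k l| < ε)) := by
  constructor
  · intro k l
    set Φ := laguerreMatrix p T L with hΦ
    set Ψ := (Φᵀ * Φ)⁻¹ * Φᵀ with hΨ
    have hintg : ∀ (c : ℝ) (s t : Fin T), Integrable (fun ω => c * (e s ω * e t ω)) μ :=
      fun c s t => (hint s t).const_mul c
    have hexp : (fun ω => (∑ t : Fin T, Ψ k t * e t ω) * (∑ t : Fin T, Ψ l t * e t ω))
        = fun ω => ∑ s : Fin T, ∑ t : Fin T, (Ψ k s * Ψ l t) * (e s ω * e t ω) := by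
      funext ω
      rw [Finset.sum_mul_sum]
      exact Finset.sum_congr rfl fun s _ => Finset.sum_congr rfl fun t _ => by ring
    rw [hexp, integral_finset_sum _
      (fun s _ => integrable_finset_sum _ (fun t _ => hintg _ s t))]
    have hin : ∀ s : Fin T, ∫ ω, ∑ t : Fin T, (Ψ k s * Ψ l t) * (e s ω * e t ω) ∂μ
        = Ψ k s * Ψ l s * lam := by
      intro s
      rw [integral_finset_sum _ (fun t _ => hintg _ s t)]
      have : ∀ t : Fin T, ∫ ω, (Ψ k s * Ψ l t) * (e s ω * e t ω) ∂μ
          = (Ψ k s * Ψ l t) * (if s = t then lam else 0) := by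
        intro t
        rw [MeasureTheory.integral_const_mul, hcov s t]
      rw [Finset.sum_congr rfl fun t _ => this t]
      simp [mul_ite, Finset.sum_ite_eq]
    rw [Finset.sum_congr rfl fun s _ => hin s]
    have hP : (Ψ * Ψᵀ) k l = (Φᵀ * Φ)⁻¹ k l := by
      rw [psi_psiT Φ hinv]
    rw [Matrix.mul_apply] at hP
    simp only [Matrix.transpose_apply] at hP
    rw [← hP, Finset.mul_sum]
    exact Finset.sum_congr rfl fun s _ => by ring
  · intro ε hε
    obtain ⟨hinvT, hdet⟩ := lag_inv_tendsto p hp0 hp1 L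
    have hgram := lag_gram_tendsto p hp0 hp1 L
    have ha : Tendsto (fun T' => (laguerreMatrix p T' L)ᵀ * laguerreMatrix p T' L
        - (1 : Matrix (Fin L) (Fin L) ℝ)) atTop (nhds 0) := by
      simpa using hgram.sub
        (tendsto_const_nhds (x := (1 : Matrix (Fin L) (Fin L) ℝ)) (f := atTop))
    have hb : Tendsto (fun T' => lam • ((laguerreMatrix p T' L)ᵀ * laguerreMatrix p T' L)⁻¹
        - lam • (1 : Matrix (Fin L) (Fin L) ℝ)) atTop (nhds 0) := by
      simpa using (hinvT.const_smul lam).sub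
        (tendsto_const_nhds (x := lam • (1 : Matrix (Fin L) (Fin L) ℝ)) (f := atTop))
    have hentry : ∀ (g : ℕ → Matrix (Fin L) (Fin L) ℝ),
        Tendsto g atTop (nhds 0) →
        ∀ᶠ T' in atTop, ∀ k l : Fin L, |g T' k l| < ε := by
      intro g hg
      refine eventually_all.2 fun k => eventually_all.2 fun l => ?_
      have h1 : Tendsto (fun T' => g T' k l) atTop (nhds 0) :=
        tendsto_pi_nhds.mp (tendsto_pi_nhds.mp hg k) l
      have := NormedAddCommGroup.tendsto_nhds_zero.mp h1 ε hε
      simpa [Real.norm_eq_abs] using this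
    have hA := hentry _ ha
    have hB := hentry _ hb
    have hC : ∀ᶠ T' in atTop,
        IsUnit ((laguerreMatrix p T' L)ᵀ * laguerreMatrix p T' L).det :=
      (hdet.eventually_ne one_ne_zero).mono fun T' h => isUnit_iff_ne_zero.2 h
    obtain ⟨T₀, hT₀⟩ := eventually_atTop.mp ((hA.and hB).and hC)
    refine ⟨T₀, fun T' hT' => ?_⟩
    obtain ⟨⟨h1, h2⟩, h3⟩ := hT₀ T' hT'
    refine ⟨h1, fun k l => ?_⟩
    rw [psi_psiT (laguerreMatrix p T' L) h3]
    exact h2 k l
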